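/- Let D be a commutative integral domain and s ∈ D^n. For every 1 ≤ j ≤ n, either LC_j = LC_{j−1} or LC_j = j − LC_{j−1}, where LC_0 = 0. Equivalently, LC_j = max(LC_{j−1}, j − LC_{j−1}) whenever LC_j ≠ LC_{j−1}. -/
import Mathlib


open Polynomial Finset

/-- `f` is a (nonzero) annihilator of the finite sequence `s_1,…,s_n`:
`f_0 s_{j-d} + … + f_d s_j = 0` for all `d+1 ≤ j ≤ n`, where `d = deg f`. -/
def Annih (D : Type*) [CommRing D] (s : ℕ → D) (n : ℕ) (f : Polynomial D) : Prop :=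
  f ≠ 0 ∧ ∀ j : ℕ, f.natDegree + 1 ≤ j → j ≤ n →
    ∑ k ∈ Finset.range (f.natDegree + 1), f.coeff k * s (j - f.natDegree + k) = 0

/-- The linear complexity of `s_1,…,s_n`: minimal degree of a nonzero annihilator. -/
noncomputable def LC (D : Type*) [CommRing D] (s : ℕ → D) (n : ℕ) : ℕ :=
  sInf {d : ℕ | ∃ f : Polynomial D, Annih D s n f ∧ f.natDegree = d}

/-- The discrepancy `Δ_n(f) = Σ_{k=0}^{d} f_k s_{n-d+k}`. -/
def disc (D : Type*) [CommRing D] (s : ℕ → D) (n : ℕ) (f : Polynomial D) : D :=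
  ∑ k ∈ Finset.range (f.natDegree + 1), f.coeff k * s (n - f.natDegree + k)

section Aux

variable {D : Type*} [CommRing D] (s : ℕ → D)

/-- Padded discrepancy sum at a prescribed degree `d`. -/
def dsum (d i : ℕ) (f : Polynomial D) : D :=
  ∑ k ∈ Finset.range (d + 1), f.coeff k * s (i - d + k)

lemma disc_eq_dsum (i : ℕ) (f : Polynomial D) : disc D s i f = dsum s f.natDegree i f := rfl

lemma annih_iff_disc (n : ℕ) (f : Polynomial D) :
    Annih D s n f ↔ f ≠ 0 ∧ ∀ j : ℕ, f.natDegree + 1 ≤ j → j ≤ n → disc D s j f = 0 :=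
  Iff.rfl

lemma annih_mono {n m : ℕ} {f : Polynomial D} (h : Annih D s n f) (hmn : m ≤ n) :
    Annih D s m f :=
  ⟨h.1, fun j h1 h2 => h.2 j h1 (h2.trans hmn)⟩

lemma annih_vac [Nontrivial D] (n : ℕ) : Annih D s n (X ^ n : Polynomial D) := by
  constructor
  · exact (monic_X_pow n).ne_zero
  · intro j h1 h2
    rw [natDegree_X_pow] at h1
    omega

lemma lc_le {n : ℕ} {f : Polynomial D} (h : Annih D s n f) : LC D s n ≤ f.natDegree :=
  Nat.sInf_le ⟨f, h, rfl⟩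

lemma lc_exists [Nontrivial D] (n : ℕ) :
    ∃ f : Polynomial D, Annih D s n f ∧ f.natDegree = LC D s n :=
  Nat.sInf_mem (⟨n, X ^ n, annih_vac s n, natDegree_X_pow n⟩ :
    Set.Nonempty {d : ℕ | ∃ f : Polynomial D, Annih D s n f ∧ f.natDegree = d})

lemma lc_le_self [Nontrivial D] (n : ℕ) : LC D s n ≤ n := by
  have := lc_le s (annih_vac s n)
  rwa [natDegree_X_pow] at this

lemma lc_mono [Nontrivial D] {m n : ℕ} (h : m ≤ n) : LC D s m ≤ LC D s n := by
  obtain ⟨f, hf, hfd⟩ := lc_exists s n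
  calc LC D s m ≤ f.natDegree := lc_le s (annih_mono s hf h)
    _ = LC D s n := hfd

lemma annih_succ {n : ℕ} {f : Polynomial D} (h : Annih D s n f)
    (hd : disc D s (n + 1) f = 0) : Annih D s (n + 1) f := by
  refine ⟨h.1, fun j h1 h2 => ?_⟩
  rcases eq_or_lt_of_le h2 with rfl | hlt
  · exact hd
  · exact h.2 j h1 (by omega)

lemma lc_zero [Nontrivial D] : LC D s 0 = 0 := by
  apply Nat.sInf_eq_zero.mpr
  left
  refine ⟨1, ⟨one_ne_zero, fun j h1 h2 => ?_⟩, natDegree_one⟩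
  have hdeg : (1 : Polynomial D).natDegree = 0 := natDegree_one
  omega

lemma dsum_pad {p : Polynomial D} {d' d i : ℕ} (hdeg : p.natDegree ≤ d') (h : d' ≤ d)
    (hi : d ≤ i) : dsum s d i p = dsum s d' (i - (d - d')) p := by
  unfold dsum
  rw [← Finset.sum_subset (Finset.range_subset_range.mpr (by omega : d' + 1 ≤ d + 1))]
  · apply Finset.sum_congr rfl
    intro k hk
    simp only [Finset.mem_range] at hk
    congr 2
    omega
  · intro k hk1 hk2
    simp only [Finset.mem_range] at hk1 hk2
    rw [coeff_eq_zero_of_natDegree_lt (by omega), zero_mul]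

lemma dsum_mul_X {p : Polynomial D} {d i : ℕ} (hi : d + 1 ≤ i) :
    dsum s (d + 1) i (p * X) = dsum s d i p := by
  unfold dsum
  rw [Finset.sum_range_succ']
  simp only [coeff_mul_X, coeff_mul_X_zero, zero_mul, add_zero]
  apply Finset.sum_congr rfl
  intro k hk
  congr 2
  omega

lemma dsum_mul_X_pow {p : Polynomial D} {d i : ℕ} (a : ℕ) (hi : d + a ≤ i) :
    dsum s (d + a) i (p * X ^ a) = dsum s d i p := by
  induction a with
  | zero => simp
  | succ a ih =>
    rw [pow_succ, ← mul_assoc, show d + (a + 1) = (d + a) + 1 by ring,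
      dsum_mul_X s (by omega), ih (by omega)]

lemma dsum_sub (d i : ℕ) (p q : Polynomial D) :
    dsum s d i (p - q) = dsum s d i p - dsum s d i q := by
  unfold dsum
  rw [← Finset.sum_sub_distrib]
  apply Finset.sum_congr rfl
  intro k _
  rw [coeff_sub, sub_mul]

lemma dsum_C_mul (d i : ℕ) (c : D) (p : Polynomial D) :
    dsum s d i (C c * p) = c * dsum s d i p := by
  unfold dsum
  rw [Finset.mul_sum]
  apply Finset.sum_congr rfl
  intro k _
  rw [coeff_C_mul, mul_assoc]

end Aux

section Domain

variable {D : Type*} [CommRing D] [IsDomain D] (s : ℕ → D)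

/-- Massey's key lemma (lower bound): if `g` annihilates the prefix of length `j` and some `f`
of small degree annihilates the prefix of length `j+1`, then `g` also annihilates index `j+1`. -/
lemma key_zero {f g : Polynomial D} {j : ℕ} (hf : Annih D s (j + 1) f)
    (hg : Annih D s j g) (hle : f.natDegree + g.natDegree + 1 ≤ j + 1) :
    disc D s (j + 1) g = 0 := by
  set d := f.natDegree with hd
  set e := g.natDegree with he
  have hfd : f.coeff d ≠ 0 := by
    rw [hd]
    exact mt leadingCoeff_eq_zero.mp hf.1
  have key : f.coeff d * disc D s (j + 1) g = 0 := by
    unfold disc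
    rw [Finset.mul_sum]
    have step : ∀ k ∈ Finset.range (e + 1),
        f.coeff d * (g.coeff k * s (j + 1 - e + k)) =
        g.coeff k * -(∑ l ∈ Finset.range d, f.coeff l * s (j + 1 - e + k - d + l)) := by
      intro k hk
      simp only [Finset.mem_range] at hk
      have hrel := hf.2 (j + 1 - e + k) (by omega) (by omega)
      rw [Finset.sum_range_succ] at hrel
      have harg : j + 1 - e + k - d + d = j + 1 - e + k := by omega
      rw [harg] at hrel
      have hkey : f.coeff d * s (j + 1 - e + k) =
          -(∑ l ∈ Finset.range d, f.coeff l * s (j + 1 - e + k - d + l)) := by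
        rw [← hd] at hrel
        linear_combination hrel
      calc f.coeff d * (g.coeff k * s (j + 1 - e + k))
          = g.coeff k * (f.coeff d * s (j + 1 - e + k)) := by ring
        _ = g.coeff k * -(∑ l ∈ Finset.range d, f.coeff l * s (j + 1 - e + k - d + l)) := by
            rw [hkey]
    rw [Finset.sum_congr rfl step]
    have swap : ∑ k ∈ Finset.range (e + 1),
        g.coeff k * -(∑ l ∈ Finset.range d, f.coeff l * s (j + 1 - e + k - d + l)) =
        -(∑ l ∈ Finset.range d, f.coeff l *
          (∑ k ∈ Finset.range (e + 1), g.coeff k * s (j + 1 - d + l - e + k))) := by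
      have step2 : ∀ k ∈ Finset.range (e + 1),
          g.coeff k * -(∑ l ∈ Finset.range d, f.coeff l * s (j + 1 - e + k - d + l)) =
          ∑ l ∈ Finset.range d,
            -(f.coeff l * (g.coeff k * s (j + 1 - d + l - e + k))) := by
        intro k hk
        simp only [Finset.mem_range] at hk
        rw [mul_neg, Finset.mul_sum, ← Finset.sum_neg_distrib]
        apply Finset.sum_congr rfl
        intro l hl
        simp only [Finset.mem_range] at hl
        have harg : j + 1 - e + k - d + l = j + 1 - d + l - e + k := by omega
        rw [harg]
        ring
      rw [Finset.sum_congr rfl step2, Finset.sum_comm]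
      rw [← Finset.sum_neg_distrib]
      apply Finset.sum_congr rfl
      intro l _
      rw [Finset.mul_sum, ← Finset.sum_neg_distrib]
    rw [swap]
    have inner : ∀ l ∈ Finset.range d,
        f.coeff l * (∑ k ∈ Finset.range (e + 1), g.coeff k * s (j + 1 - d + l - e + k)) = 0 := by
      intro l hl
      simp only [Finset.mem_range] at hl
      have := hg.2 (j + 1 - d + l) (by omega) (by omega)
      rw [← he] at this
      rw [this, mul_zero]
    rw [Finset.sum_congr rfl inner]
    simp
  rcases mul_eq_zero.mp key with h | h
  · exact absurd h hfd
  · exact h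

/-- Berlekamp–Massey update: construction of an annihilator of the extended prefix. -/
lemma construct {f g : Polynomial D} {j m : ℕ} (hf : Annih D s j f) (hg : Annih D s m g)
    (hm : m + 1 ≤ j) (hsum : g.natDegree + f.natDegree = m + 1)
    (hb : disc D s (m + 1) g ≠ 0) :
    ∃ h : Polynomial D, Annih D s (j + 1) h ∧
      h.natDegree = max f.natDegree (j + 1 - f.natDegree) := by
  set d := f.natDegree with hd
  set e := g.natDegree with he
  set b := disc D s (m + 1) g with hbdef
  set Δ := disc D s (j + 1) f with hΔdef
  set Dm := max d (j + 1 - d) with hDm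
  have hdj : d ≤ j := by
    -- d = m + 1 - e ≤ m + 1 ≤ j
    omega
  have hDd : d ≤ Dm := le_max_left _ _
  have hDjd : j + 1 - d ≤ Dm := le_max_right _ _
  set α := Dm - d with hα
  set β := Dm - (j + 1 - d) with hβ
  have hf0 : f ≠ 0 := hf.1
  have hg0 : g ≠ 0 := hg.1
  set A := f * X ^ α with hA
  set B := g * X ^ β with hB
  have hAdeg : A.natDegree = Dm := by
    rw [hA, natDegree_mul_X_pow α hf0, ← hd]
    omega
  have hBdeg : B.natDegree = Dm - (j - m) := by
    rw [hB, natDegree_mul_X_pow β hg0, ← he]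
    omega
  set h := C b * A - C Δ * B with hh
  have hcoeffD : h.coeff Dm = b * f.coeff d := by
    rw [hh, coeff_sub, coeff_C_mul, coeff_C_mul]
    have hBc : B.coeff Dm = 0 := coeff_eq_zero_of_natDegree_lt (by omega)
    have hAc : A.coeff Dm = f.coeff d := by
      rw [hA, coeff_mul_X_pow' f α Dm, if_pos (by omega)]
      congr 1
      omega
    rw [hAc, hBc, mul_zero, sub_zero]
  have hfd : f.coeff d ≠ 0 := by
    rw [hd]; exact mt leadingCoeff_eq_zero.mp hf0
  have hcoeffD_ne : h.coeff Dm ≠ 0 := by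
    rw [hcoeffD]
    exact mul_ne_zero hb hfd
  have hdegle : h.natDegree ≤ Dm := by
    refine le_trans (natDegree_sub_le _ _) (max_le ?_ ?_)
    · exact le_trans (natDegree_C_mul_le b A) (le_of_eq hAdeg)
    · exact le_trans (natDegree_C_mul_le Δ B) (by omega)
  have hdeg : h.natDegree = Dm := natDegree_eq_of_le_of_coeff_ne_zero hdegle hcoeffD_ne
  have hne : h ≠ 0 := fun h0 => hcoeffD_ne (by rw [h0, coeff_zero])
  refine ⟨h, ⟨hne, ?_⟩, by rw [hdeg]⟩
  intro i h1 h2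
  rw [hdeg] at h1
  -- the sum is dsum s Dm i h
  have hsum_eq : ∑ k ∈ Finset.range (h.natDegree + 1), h.coeff k * s (i - h.natDegree + k)
      = dsum s Dm i h := by rw [hdeg]; rfl
  rw [hsum_eq, hh, dsum_sub, dsum_C_mul, dsum_C_mul]
  have hAval : dsum s Dm i A = disc D s i f := by
    rw [hA, show Dm = d + α by omega, dsum_mul_X_pow s α (by omega), disc_eq_dsum, ← hd]
  have hBval : dsum s Dm i B = disc D s (i - (j - m)) g := by
    rw [dsum_pad s (le_of_eq hBdeg) (by omega) (by omega),
      show Dm - (Dm - (j - m)) = j - m by omega,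
      show Dm - (j - m) = e + β by omega, hB, dsum_mul_X_pow s β (by omega),
      disc_eq_dsum, ← he]
  rw [hAval, hBval]
  rcases eq_or_lt_of_le h2 with rfl | hlt
  · -- i = j + 1
    have hi' : j + 1 - (j - m) = m + 1 := by omega
    rw [hi', ← hbdef, ← hΔdef]
    ring
  · -- i ≤ j
    have hAz : disc D s i f = 0 := hf.2 i (by omega) (by omega)
    have hBz : disc D s (i - (j - m)) g = 0 := hg.2 (i - (j - m)) (by omega) (by omega)
    rw [hAz, hBz, mul_zero, mul_zero, sub_zero]

end Domain

lemma main_ind {D : Type*} [CommRing D] [IsDomain D] (s : ℕ → D) : ∀ j : ℕ,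
    (LC D s j = 0 ∨ ∃ m g, m + 1 ≤ j ∧ Annih D s m g ∧
      g.natDegree + LC D s j = m + 1 ∧ disc D s (m + 1) g ≠ 0) ∧
    (LC D s j = LC D s (j - 1) ∨
      (2 * LC D s (j - 1) + 1 ≤ j ∧ LC D s j = j - LC D s (j - 1))) := by
  intro j
  induction j with
  | zero => exact ⟨Or.inl (lc_zero s), Or.inl rfl⟩
  | succ j ih =>
    obtain ⟨inv, -⟩ := ih
    simp only [Nat.add_sub_cancel]
    obtain ⟨f, hf, hfd⟩ := lc_exists s j
    by_cases hC : LC D s (j + 1) = LC D s j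
    · refine ⟨?_, Or.inl hC⟩
      rcases inv with h0 | ⟨m, g, hm, hg, hsum, hb⟩
      · exact Or.inl (by rw [hC, h0])
      · exact Or.inr ⟨m, g, by omega, hg, by omega, hb⟩
    · have hmono : LC D s j ≤ LC D s (j + 1) := lc_mono s (Nat.le_succ j)
      have hgt : LC D s j < LC D s (j + 1) := lt_of_le_of_ne hmono (fun h => hC h.symm)
      have hΔ : disc D s (j + 1) f ≠ 0 := by
        intro h0
        have h1 : Annih D s (j + 1) f := annih_succ s hf h0
        have := lc_le s h1
        omega
      have h2d : 2 * LC D s j ≤ j := by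
        by_contra hcon
        push_neg at hcon
        have hd0 : LC D s j ≠ 0 := by omega
        rcases inv with h0 | ⟨m, g, hm, hg, hsum, hb⟩
        · exact hd0 h0
        · obtain ⟨h, hh, hhdeg⟩ := construct s hf hg (by omega) (by omega) hb
          have := lc_le s hh
          rw [hhdeg, hfd] at this
          omega
      have hlow : j + 1 - LC D s j ≤ LC D s (j + 1) := by
        by_contra hcon
        push_neg at hcon
        obtain ⟨f', hf', hfd'⟩ := lc_exists s (j + 1)
        exact hΔ (key_zero s hf' hf (by omega))
      have hup : LC D s (j + 1) ≤ j + 1 - LC D s j := by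
        rcases inv with h0 | ⟨m, g, hm, hg, hsum, hb⟩
        · have := lc_le_self s (j + 1)
          omega
        · obtain ⟨h, hh, hhdeg⟩ := construct s hf hg (by omega) (by omega) hb
          have := lc_le s hh
          rw [hhdeg, hfd] at this
          omega
      refine ⟨Or.inr ⟨j, f, le_refl _, hf, by omega, hΔ⟩, Or.inr ⟨by omega, by omega⟩⟩

theorem LC_step (D : Type*) [CommRing D] [IsDomain D]
    (n : ℕ) (s : ℕ → D) (j : ℕ) (hj1 : 1 ≤ j) (hjn : j ≤ n) :
    (LC D s j = LC D s (j - 1) ∨ LC D s j = j - LC D s (j - 1)) ∧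
    (LC D s j ≠ LC D s (j - 1) →
      LC D s j = max (LC D s (j - 1)) (j - LC D s (j - 1))) := by
  obtain ⟨-, hstep⟩ := main_ind s j
  rcases hstep with h | ⟨h1, h2⟩
  · exact ⟨Or.inl h, fun hne => absurd h hne⟩
  · refine ⟨Or.inr h2, fun _ => ?_⟩
    rw [h2]
    exact (max_eq_right (by omega)).symm
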